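/- arXiv:1310.5634 — 2 statements merged into one kernel-verified Lean document; each statement's English description precedes it below -/
import Mathlib

section
/- Let n > 1 be an odd integer. Then there exists an n×n tournament matrix T (i.e. a (0,1)-matrix with T_{ii} = 0 for all i and T_{ij} + T_{ji} = 1 for all i ≠ j) such that per(T) ≥ √e · ((n−1)/(2e))ⁿ. -/
open Nat

/-- The permanent of a square real matrix. -/
noncomputable def perm {n : ℕ} (M : Matrix (Fin n) (Fin n) ℝ) : ℝ :=
  ∑ σ : Equiv.Perm (Fin n), ∏ i, M i (σ i)

namespace Avg

open Finset Equiv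

/-- tournament matrix built from an orientation choice `u` on ordered pairs. -/
def TM (n : ℕ) (u : Fin n × Fin n → Bool) : Matrix (Fin n) (Fin n) ℝ :=
  fun i j => if i < j then (if u (i, j) then 1 else 0)
    else if j < i then (if u (j, i) then 0 else 1) else 0

lemma TM_nonneg (n : ℕ) (u : Fin n × Fin n → Bool) (i j : Fin n) : 0 ≤ TM n u i j := by
  unfold TM; split_ifs <;> norm_num

lemma TM_zero_one (n : ℕ) (u : Fin n × Fin n → Bool) (i j : Fin n) :
    TM n u i j = 0 ∨ TM n u i j = 1 := by
  unfold TM; split_ifs <;> simp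

lemma TM_diag (n : ℕ) (u : Fin n × Fin n → Bool) (i : Fin n) : TM n u i i = 0 := by
  unfold TM; simp

lemma TM_tour (n : ℕ) (u : Fin n × Fin n → Bool) (i j : Fin n) (hij : i ≠ j) :
    TM n u i j + TM n u j i = 1 := by
  unfold TM
  rcases lt_or_gt_of_ne hij with h | h
  · rw [if_pos h, if_neg (not_lt_of_gt h), if_pos h]
    cases u (i, j) <;> norm_num
  · rw [if_neg (not_lt_of_gt h), if_pos h, if_pos h]
    cases u (j, i) <;> norm_num

/-- key counting lemma -/
lemma sum_indicator {α β : Type*} [Fintype α] [DecidableEq α] [Fintype β] [DecidableEq β]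
    (k : β → α) (hk : Function.Injective k) (v : β → Bool) :
    ∑ u : α → Bool, ∏ i : β, (if u (k i) = v i then (1:ℝ) else 0)
      = 2 ^ (Fintype.card α - Fintype.card β) := by
  have hg : ∀ u : α → Bool, (∏ i : β, if u (k i) = v i then (1:ℝ) else 0)
      = ∏ p : α, ∏ i : β, (if k i = p then (if u p = v i then (1:ℝ) else 0) else 1) := by
    intro u
    rw [Finset.prod_comm]
    refine Finset.prod_congr rfl fun i _ => ?_
    rw [Finset.prod_ite_eq]
    simp
  simp_rw [hg]
  rw [← Fintype.prod_sum fun p b => ∏ i : β, (if k i = p then (if b = v i then (1:ℝ) else 0) else 1)]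
  have hval : ∀ p : α, (∑ b : Bool, ∏ i : β, (if k i = p then (if b = v i then (1:ℝ) else 0) else 1))
      = if p ∈ Finset.image k Finset.univ then 1 else 2 := by
    intro p
    by_cases hp : p ∈ Finset.image k Finset.univ
    · obtain ⟨i₀, -, rfl⟩ := Finset.mem_image.mp hp
      have h1 : ∀ b : Bool, (∏ i : β, (if k i = k i₀ then (if b = v i then (1:ℝ) else 0) else 1))
          = if b = v i₀ then 1 else 0 := by
        intro b
        rw [Finset.prod_eq_single i₀]
        · simp
        · intro j _ hj
          exact if_neg fun h => hj (hk h)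
        · simp
      rw [Fintype.sum_bool, h1, h1, if_pos hp]
      cases hb : v i₀ <;> simp
    · have h1 : ∀ b : Bool, (∏ i : β, (if k i = p then (if b = v i then (1:ℝ) else 0) else 1)) = 1 := by
        intro b
        refine Finset.prod_eq_one fun i _ => if_neg fun h => hp ?_
        exact Finset.mem_image.mpr ⟨i, Finset.mem_univ i, h⟩
      rw [Fintype.sum_bool, h1, h1, if_neg hp]; norm_num
  simp_rw [hval]
  rw [Finset.prod_ite (fun _ => (1:ℝ)) (fun _ => (2:ℝ)), Finset.prod_const_one, one_mul,
    Finset.prod_const]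
  congr 1
  rw [Finset.filter_not, Finset.filter_univ_mem, Finset.card_sdiff_of_subset (Finset.subset_univ _),
    Finset.card_image_of_injective _ hk]
  simp

/-- permutations all of whose cycles have length at least 3 -/
def good (n : ℕ) : Finset (Perm (Fin n)) :=
  Finset.univ.filter fun σ => ∀ i, σ i ≠ i ∧ σ (σ i) ≠ i

lemma sum_tm {n : ℕ} (σ : Perm (Fin n)) (hσ : ∀ i, σ i ≠ i ∧ σ (σ i) ≠ i) :
    ∑ u : Fin n × Fin n → Bool, ∏ i, TM n u i (σ i) = 2 ^ (n*n - n) := by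
  classical
  set key : Fin n → Fin n × Fin n := fun i => if i < σ i then (i, σ i) else (σ i, i) with hkey
  set val : Fin n → Bool := fun i => decide (i < σ i) with hval
  have hprod : ∀ u : Fin n × Fin n → Bool, ∀ i,
      TM n u i (σ i) = if u (key i) = val i then 1 else 0 := by
    intro u i
    rcases lt_trichotomy i (σ i) with h | h | h
    · simp only [hkey, hval, TM, if_pos h, if_neg (not_lt_of_gt h), h]
      cases u (i, σ i) <;> simp
    · exact absurd h.symm (hσ i).1
    · have h' : ¬ i < σ i := not_lt_of_gt h
      simp only [hkey, hval, TM, if_neg (not_lt_of_gt h), if_pos h, h']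
      cases u (σ i, i) <;> simp
  have hinj : Function.Injective key := by
    intro i j hij
    simp only [hkey] at hij
    by_cases hi : i < σ i <;> by_cases hj : j < σ j
    · rw [if_pos hi, if_pos hj] at hij
      exact (Prod.mk.injEq _ _ _ _ ▸ hij).1
    · rw [if_pos hi, if_neg hj] at hij
      obtain ⟨h1, h2⟩ := Prod.mk.injEq _ _ _ _ ▸ hij
      exact absurd (by rw [← h1, h2]) (hσ j).2
    · rw [if_neg hi, if_pos hj] at hij
      obtain ⟨h1, h2⟩ := Prod.mk.injEq _ _ _ _ ▸ hij
      exact absurd (by rw [h1, ← h2]) (hσ i).2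
    · rw [if_neg hi, if_neg hj] at hij
      exact (Prod.mk.injEq _ _ _ _ ▸ hij).2
  calc ∑ u : Fin n × Fin n → Bool, ∏ i, TM n u i (σ i)
      = ∑ u : Fin n × Fin n → Bool, ∏ i, (if u (key i) = val i then (1:ℝ) else 0) := by
        refine Finset.sum_congr rfl fun u _ => Finset.prod_congr rfl fun i _ => hprod u i
    _ = 2 ^ (Fintype.card (Fin n × Fin n) - Fintype.card (Fin n)) := sum_indicator key hinj val
    _ = 2 ^ (n*n - n) := by simp

lemma exists_tm (n : ℕ) (hn : 1 ≤ n) :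
    ∃ u : Fin n × Fin n → Bool, ((good n).card : ℝ) / 2 ^ n ≤ perm (TM n u) := by
  classical
  have hle : n ≤ n * n := Nat.le_mul_of_pos_left n hn
  have hkey : ((good n).card : ℝ) * 2 ^ (n*n - n)
      ≤ ∑ u : Fin n × Fin n → Bool, perm (TM n u) := by
    unfold perm
    rw [Finset.sum_comm]
    have h1 : ∑ σ ∈ good n, (2:ℝ) ^ (n*n-n)
        ≤ ∑ σ : Perm (Fin n), ∑ u : Fin n × Fin n → Bool, ∏ i, TM n u i (σ i) := by
      have h2 : ∑ σ ∈ good n, (2:ℝ) ^ (n*n-n)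
          = ∑ σ ∈ good n, ∑ u : Fin n × Fin n → Bool, ∏ i, TM n u i (σ i) := by
        refine Finset.sum_congr rfl fun σ hσ => ?_
        rw [sum_tm σ (Finset.mem_filter.mp hσ).2]
      rw [h2]
      refine Finset.sum_le_sum_of_subset_of_nonneg (Finset.subset_univ _) fun σ _ _ => ?_
      exact Finset.sum_nonneg fun u _ => Finset.prod_nonneg fun i _ => TM_nonneg n u i (σ i)
    calc ((good n).card : ℝ) * 2 ^ (n*n - n)
        = ∑ σ ∈ good n, (2:ℝ) ^ (n*n-n) := by rw [Finset.sum_const, nsmul_eq_mul]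
      _ ≤ _ := h1
  have hcard : (Finset.univ : Finset (Fin n × Fin n → Bool)).card = 2 ^ (n*n) := by
    simp [Fintype.card_fun]
  have hsum : ∑ u : Fin n × Fin n → Bool, ((good n).card : ℝ) / 2 ^ n
      ≤ ∑ u : Fin n × Fin n → Bool, perm (TM n u) := by
    rw [Finset.sum_const, hcard, nsmul_eq_mul]
    refine le_trans (le_of_eq ?_) hkey
    have h2 : (2:ℝ) ^ (n*n) = 2 ^ (n*n - n) * 2 ^ n := by
      rw [← pow_add, Nat.sub_add_cancel hle]
    push_cast
    rw [h2]
    field_simp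
  obtain ⟨u, -, hu⟩ := Finset.exists_le_of_sum_le ⟨fun _ => true, Finset.mem_univ _⟩ hsum
  exact ⟨u, hu⟩

def der (n : ℕ) : Finset (Perm (Fin n)) :=
  Finset.univ.filter fun σ => ∀ i, σ i ≠ i

def pairs (n : ℕ) : Finset (Fin n × Fin n) :=
  Finset.univ.filter fun p => p.1 < p.2

def badAt (n : ℕ) (p : Fin n × Fin n) : Finset (Perm (Fin n)) :=
  (der n).filter fun σ => σ p.1 = p.2 ∧ σ p.2 = p.1

lemma der_card (n : ℕ) : (der n).card = numDerangements n := by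
  classical
  have h1 : Fintype.card (derangements (Fin n)) = numDerangements n := by
    rw [card_derangements_eq_numDerangements, Fintype.card_fin]
  have h2 : der n = (derangements (Fin n)).toFinset := by
    ext σ
    simp [der, Set.mem_toFinset]; rfl
  rw [h2, Set.toFinset_card]
  exact h1

lemma badAt_card {n : ℕ} (p : Fin n × Fin n) (hp : p.1 ≠ p.2) :
    (badAt n p).card ≤ numDerangements (n - 2) := by
  classical
  set Q : Fin n → Prop := fun x => x ≠ p.1 ∧ x ≠ p.2 with hQ
  set t : Finset (Perm {x : Fin n // Q x}) := (derangements {x : Fin n // Q x}).toFinset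
    with ht
  have htcard : t.card = numDerangements (n - 2) := by
    have h2 : Fintype.card {x : Fin n // Q x} = n - 2 := by
      rw [Fintype.card_subtype]
      have h3 : Finset.univ.filter Q = (Finset.univ : Finset (Fin n)) \ {p.1, p.2} := by
        ext x
        simp [hQ, and_comm]
      rw [h3, Finset.card_sdiff_of_subset (Finset.subset_univ _)]
      rw [Finset.card_insert_of_notMem (by simpa using hp), Finset.card_singleton]
      simp
    rw [ht, Set.toFinset_card, card_derangements_eq_numDerangements, h2]
  rw [← htcard]
  have hmap : ∀ σ : Perm (Fin n), σ ∈ badAt n p → ∀ x, Q x ↔ Q (σ x) := by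
    intro σ hσ x
    obtain ⟨hd, hpa, hpb⟩ := Finset.mem_filter.mp hσ
    have hσ1 : ∀ y, σ y = p.1 ↔ y = p.2 := by
      intro y
      constructor
      · intro h; exact σ.injective (h.trans hpb.symm)
      · rintro rfl; exact hpb
    have hσ2 : ∀ y, σ y = p.2 ↔ y = p.1 := by
      intro y
      constructor
      · intro h; exact σ.injective (h.trans hpa.symm)
      · rintro rfl; exact hpa
    simp only [hQ, ne_eq, hσ1, hσ2]
    tauto
  classical
  refine Finset.card_le_card_of_injOn
    (fun σ => if h : σ ∈ badAt n p then σ.subtypePerm (fun x => (hmap σ h x).symm) else 1)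
    (fun σ hσ => ?_) ?_
  · simp only [dif_pos (Finset.mem_coe.mp hσ)]
    rw [Finset.mem_coe, Set.mem_toFinset]
    intro x hcon
    have hd := (Finset.mem_filter.mp (Finset.mem_filter.mp hσ).1).2
    exact hd x.1 (congrArg Subtype.val hcon)
  · intro σ₁ h₁ σ₂ h₂ heq
    have h₁' := Finset.mem_coe.mp h₁
    have h₂' := Finset.mem_coe.mp h₂
    simp only [dif_pos h₁', dif_pos h₂'] at heq
    obtain ⟨-, ha1, hb1⟩ := Finset.mem_filter.mp h₁'
    obtain ⟨-, ha2, hb2⟩ := Finset.mem_filter.mp h₂'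
    ext x
    by_cases hx1 : x = p.1
    · rw [hx1, ha1, ha2]
    · by_cases hx2 : x = p.2
      · rw [hx2, hb1, hb2]
      · have hh : σ₁.subtypePerm (fun x => (hmap σ₁ h₁' x).symm) ⟨x, ⟨hx1, hx2⟩⟩
            = σ₂.subtypePerm (fun x => (hmap σ₂ h₂' x).symm) ⟨x, ⟨hx1, hx2⟩⟩ := by rw [heq]
        have h5 := Subtype.ext_iff.mp hh
        simp only [Equiv.Perm.subtypePerm_apply] at h5
        exact congrArg Fin.val h5

lemma good_subset (n : ℕ) : der n \ good n ⊆ (pairs n).biUnion (badAt n) := by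
  classical
  intro σ hσ
  obtain ⟨hd, hng⟩ := Finset.mem_sdiff.mp hσ
  have hder := (Finset.mem_filter.mp hd).2
  rw [good, Finset.mem_filter] at hng
  push_neg at hng
  obtain ⟨i, hi⟩ := hng (Finset.mem_univ _)
  have h2 : σ (σ i) = i := hi (hder i)
  rcases lt_trichotomy i (σ i) with h | h | h
  · refine Finset.mem_biUnion.mpr ⟨(i, σ i), Finset.mem_filter.mpr ⟨Finset.mem_univ _, h⟩, ?_⟩
    exact Finset.mem_filter.mpr ⟨hd, rfl, h2⟩
  · exact absurd h.symm (hder i)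
  · refine Finset.mem_biUnion.mpr ⟨(σ i, i), Finset.mem_filter.mpr ⟨Finset.mem_univ _, h⟩, ?_⟩
    exact Finset.mem_filter.mpr ⟨hd, h2, rfl⟩

lemma pairs_card (n : ℕ) : 2 * (pairs n).card = n * n - n := by
  classical
  set revs : Finset (Fin n × Fin n) := Finset.univ.filter (fun p => p.2 < p.1) with hrevs
  have himg : revs = (pairs n).image Prod.swap := by
    ext ⟨a, b⟩
    simp only [hrevs, pairs, Finset.mem_filter, Finset.mem_univ, true_and, Finset.mem_image,
      Prod.exists]
    constructor
    · intro h
      exact ⟨b, a, h, rfl⟩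
    · rintro ⟨x, y, hxy, hswap⟩
      have : (y, x) = (a, b) := hswap
      obtain ⟨h1, h2⟩ := Prod.mk.injEq _ _ _ _ ▸ this
      subst h1; subst h2; exact hxy
  have hrevcard : revs.card = (pairs n).card := by
    rw [himg, Finset.card_image_of_injective _ Prod.swap_injective]
  have hunion : (Finset.univ : Finset (Fin n)).offDiag = pairs n ∪ revs := by
    ext ⟨a, b⟩
    simp only [Finset.mem_offDiag, Finset.mem_univ, true_and, Finset.mem_union, hrevs, pairs,
      Finset.mem_filter]
    exact ⟨fun h => lt_or_gt_of_ne h, fun h => h.elim ne_of_lt ne_of_gt⟩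
  have hdisj : Disjoint (pairs n) revs := by
    rw [Finset.disjoint_left]
    intro p hp hp'
    have h1 := (Finset.mem_filter.mp hp).2
    have h2 := (Finset.mem_filter.mp hp').2
    exact absurd h2 (lt_asymm h1)
  have := Finset.offDiag_card (Finset.univ : Finset (Fin n))
  rw [hunion, Finset.card_union_of_disjoint hdisj, hrevcard] at this
  simp only [Finset.card_univ, Fintype.card_fin] at this
  omega

lemma main_count (n : ℕ) :
    numDerangements n ≤ (good n).card + (pairs n).card * numDerangements (n - 2) := by
  classical
  have h1 : der n ⊆ good n ∪ (der n \ good n) := by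
    intro σ hσ
    by_cases h : σ ∈ good n
    · exact Finset.mem_union_left _ h
    · exact Finset.mem_union_right _ (Finset.mem_sdiff.mpr ⟨hσ, h⟩)
  have h2 : (der n).card ≤ (good n).card + (der n \ good n).card :=
    le_trans (Finset.card_le_card h1) (Finset.card_union_le _ _)
  have h3 : (der n \ good n).card ≤ (pairs n).card * numDerangements (n - 2) := by
    refine le_trans (Finset.card_le_card (good_subset n)) (le_trans Finset.card_biUnion_le ?_)
    calc ∑ p ∈ pairs n, (badAt n p).card
        ≤ ∑ p ∈ pairs n, numDerangements (n - 2) :=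
          Finset.sum_le_sum fun p hp => badAt_card p (ne_of_lt (Finset.mem_filter.mp hp).2)
      _ = (pairs n).card * numDerangements (n - 2) := by
          rw [Finset.sum_const, smul_eq_mul]
  rw [← der_card n]
  omega

lemma numDer_div (n : ℕ) :
    (numDerangements n : ℝ) / n ! = ∑ k ∈ Finset.range (n+1), (-1:ℝ)^k / k ! := by
  rw [← Int.cast_natCast, numDerangements_sum]
  push_cast
  rw [Finset.sum_div]
  refine Finset.sum_congr rfl ?_
  intro k hk
  have h_le : k ≤ n := Finset.mem_range_succ_iff.mp hk
  rw [Nat.ascFactorial_eq_div, add_tsub_cancel_of_le h_le]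
  push_cast [Nat.factorial_dvd_factorial h_le]
  field_simp [Nat.factorial_ne_zero]

lemma numDer_err (m : ℕ) :
    |(numDerangements m : ℝ) / (m ! : ℕ) - Real.exp (-1)|
      ≤ ((m:ℝ)+2)/((((m+1)! : ℕ):ℝ) * ((m:ℝ)+1)) := by
  have h := Real.exp_bound (x := (-1:ℝ)) (by norm_num) (n := m+1) (Nat.succ_pos m)
  have habs : |(-1:ℝ)| = 1 := by norm_num
  rw [habs, one_pow, one_mul] at h
  rw [numDer_div, abs_sub_comm]
  refine h.trans (le_of_eq ?_)
  push_cast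
  ring

lemma stirling_bound (m : ℕ) (hm : 1 ≤ m) :
    Real.sqrt Real.pi * (Real.sqrt (2*(m:ℝ)) * ((m:ℝ)/Real.exp 1)^m) ≤ (m ! : ℝ) := by
  obtain ⟨k, rfl⟩ : ∃ k, m = k + 1 := ⟨m - 1, by omega⟩
  have h1 : Real.sqrt Real.pi ≤ Stirling.stirlingSeq (k+1) := by
    have ht : Filter.Tendsto (Stirling.stirlingSeq ∘ Nat.succ) Filter.atTop
        (nhds (Real.sqrt Real.pi)) :=
      Stirling.tendsto_stirlingSeq_sqrt_pi.comp (Filter.tendsto_add_atTop_nat 1)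
    exact Stirling.stirlingSeq'_antitone.le_of_tendsto ht k
  rw [Stirling.stirlingSeq] at h1
  have hd : (0:ℝ) < Real.sqrt (2*((k:ℝ)+1)) * ((((k:ℝ)+1))/Real.exp 1)^(k+1) := by
    have : (0:ℝ) < (k:ℝ)+1 := by positivity
    positivity
  have h2 : Real.sqrt Real.pi * (Real.sqrt (2*((k:ℝ)+1)) * ((((k:ℝ)+1))/Real.exp 1)^(k+1))
      ≤ ((k+1)! : ℝ) := by
    rw [← le_div_iff₀ hd]
    exact h1.trans_eq (by push_cast; ring)
  convert h2 using 4 <;> push_cast <;> ring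

lemma epow (n : ℕ) (hn : 2 ≤ n) : Real.exp 1 * ((n:ℝ)-1)^n ≤ (n:ℝ)^n := by
  have hn2 : (2:ℝ) ≤ (n:ℝ) := by exact_mod_cast hn
  have hnpos : (0:ℝ) < n := by linarith
  have hne : (n:ℝ) - 1 ≠ 0 := by intro h; nlinarith
  have h3 : (0:ℝ) < 1 - 1/(n:ℝ) := by
    have h1n : 1/(n:ℝ) ≤ 1/2 := by
      apply one_div_le_one_div_of_le <;> linarith
    linarith
  have h5 : 1 - 1/(n:ℝ) ≤ (Real.exp (1/(n:ℝ)))⁻¹ := by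
    have h2 := Real.add_one_le_exp (-(1/(n:ℝ)))
    rw [Real.exp_neg] at h2
    linarith
  have h6 : Real.exp (1/(n:ℝ)) ≤ (1 - 1/(n:ℝ))⁻¹ := by
    rw [← inv_inv (Real.exp (1/(n:ℝ)))]
    exact inv_anti₀ h3 h5
  have h4 : Real.exp (1/(n:ℝ)) ≤ (n:ℝ)/((n:ℝ)-1) := by
    have heq : (1 - 1/(n:ℝ))⁻¹ = (n:ℝ)/((n:ℝ)-1) := by
      field_simp
    rw [heq] at h6
    exact h6
  have h8 : Real.exp (1/(n:ℝ)) * ((n:ℝ)-1) ≤ (n:ℝ) := by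
    have h9 := mul_le_mul_of_nonneg_right h4 (by linarith : (0:ℝ) ≤ (n:ℝ)-1)
    rw [div_mul_cancel₀ _ hne] at h9
    exact h9
  have h7 : Real.exp 1 = (Real.exp (1/(n:ℝ)))^n := by
    rw [← Real.exp_nat_mul]
    congr 1
    field_simp
  rw [h7, ← mul_pow]
  have hnn : (0:ℝ) ≤ Real.exp (1/(n:ℝ)) * ((n:ℝ)-1) := by
    have : (0:ℝ) ≤ (n:ℝ) - 1 := by linarith
    positivity
  exact pow_le_pow_left₀ hnn h8 n

set_option maxHeartbeats 1000000 in
lemma analytic (n : ℕ) (hn : n = 3 ∨ 5 ≤ n) (G : ℝ)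
    (hG : (numDerangements n : ℝ) - (((n*n - n : ℕ)):ℝ)/2 * (numDerangements (n-2) : ℝ) ≤ G) :
    Real.sqrt (Real.exp 1) * (((n:ℝ)-1)/Real.exp 1)^n ≤ G := by
  have hEgt : (2.7182818283:ℝ) < Real.exp 1 := Real.exp_one_gt_d9
  have hElt : Real.exp 1 < 2.7182818286 := Real.exp_one_lt_d9
  have hEpos : (0:ℝ) < Real.exp 1 := Real.exp_pos 1
  have hEs : Real.sqrt (Real.exp 1) * Real.sqrt (Real.exp 1) = Real.exp 1 :=
    Real.mul_self_sqrt hEpos.le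
  rcases hn with rfl | hn5
  · -- n = 3
    have hd3 : numDerangements 3 = 2 := by decide
    have hd1 : numDerangements 1 = 0 := by decide
    rw [hd3] at hG
    norm_num [hd1] at hG
    have hs2 : Real.sqrt (Real.exp 1) ≤ 2 := by
      have h4 : Real.sqrt (Real.exp 1) ≤ Real.sqrt 4 := Real.sqrt_le_sqrt (by nlinarith)
      have : Real.sqrt (4:ℝ) = 2 := by
        rw [show (4:ℝ) = 2^2 by norm_num, Real.sqrt_sq (by norm_num)]
      linarith
    have hp1 : ((3:ℝ)-1)/Real.exp 1 ≤ 1 := by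
      rw [div_le_one hEpos]; nlinarith
    have hp0 : (0:ℝ) ≤ ((3:ℝ)-1)/Real.exp 1 := by positivity
    have hpow : (((3:ℝ)-1)/Real.exp 1)^3 ≤ 1 := pow_le_one₀ hp0 hp1
    have : Real.sqrt (Real.exp 1) * (((3:ℝ)-1)/Real.exp 1)^3 ≤ 2 * 1 := by
      apply mul_le_mul hs2 hpow (by positivity) (by norm_num)
    push_cast
    linarith
  · -- n ≥ 5
    obtain ⟨k, rfl⟩ : ∃ k, n = k + 5 := ⟨n - 5, by omega⟩
    set E := Real.exp 1 with hE
    set N : ℝ := (k:ℝ) + 5 with hN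
    have hN5 : (5:ℝ) ≤ N := by rw [hN]; have : (0:ℝ) ≤ (k:ℝ) := Nat.cast_nonneg k; linarith
    -- real factorials
    set Fn : ℝ := ((k+5)! : ℝ) with hFn
    set F2 : ℝ := ((k+3)! : ℝ) with hF2
    set F4 : ℝ := ((k+4)! : ℝ) with hF4
    set F6 : ℝ := ((k+6)! : ℝ) with hF6
    have hFnpos : (0:ℝ) < Fn := by rw [hFn]; exact_mod_cast Nat.factorial_pos _
    have hF2pos : (0:ℝ) < F2 := by rw [hF2]; exact_mod_cast Nat.factorial_pos _
    have hF4pos : (0:ℝ) < F4 := by rw [hF4]; exact_mod_cast Nat.factorial_pos _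
    have hf6 : F6 = ((k:ℝ)+6) * Fn := by
      rw [hF6, hFn, show k+6 = (k+5)+1 from rfl, Nat.factorial_succ]
      push_cast; ring
    have hf4 : F4 = ((k:ℝ)+4) * F2 := by
      rw [hF4, hF2, show k+4 = (k+3)+1 from rfl, Nat.factorial_succ]
      push_cast; ring
    have hfn : Fn = ((k:ℝ)+5) * F4 := by
      rw [hFn, hF4, show k+5 = (k+4)+1 from rfl, Nat.factorial_succ]
      push_cast; ring
    set Dn : ℝ := (numDerangements (k+5) : ℝ) with hDn
    set D2 : ℝ := (numDerangements (k+3) : ℝ) with hD2d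
    -- lower bound on Dn
    have hD1 : Fn * Real.exp (-1) - 1 ≤ Dn := by
      have h := numDer_err (k+5)
      rw [← hDn, ← hFn, ← hF6] at h
      have h1 := (abs_le.mp h).1
      have h2 : Fn * (Real.exp (-1) - ((↑(k+5):ℝ)+2)/(F6 * ((↑(k+5):ℝ)+1))) ≤ Dn := by
        have h3 : Real.exp (-1) - ((↑(k+5):ℝ)+2)/(F6 * ((↑(k+5):ℝ)+1)) ≤ Dn / Fn := by
          linarith
        calc Fn * (Real.exp (-1) - ((↑(k+5):ℝ)+2)/(F6 * ((↑(k+5):ℝ)+1)))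
            ≤ Fn * (Dn / Fn) := by
              apply mul_le_mul_of_nonneg_left h3 hFnpos.le
          _ = Dn := by field_simp
      have h4 : Fn * (((↑(k+5):ℝ)+2)/(F6 * ((↑(k+5):ℝ)+1))) ≤ 1 := by
        rw [hf6, ← mul_div_assoc, div_le_one (by push_cast; positivity)]
        push_cast
        have hk0 : (0:ℝ) ≤ (k:ℝ) := Nat.cast_nonneg k
        have hcoef : ((k:ℝ)+5+2) ≤ ((k:ℝ)+6)*((k:ℝ)+6) := by nlinarith
        calc Fn * ((k:ℝ)+5+2) ≤ Fn * (((k:ℝ)+6)*((k:ℝ)+6)) :=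
              mul_le_mul_of_nonneg_left hcoef hFnpos.le
          _ = ((k:ℝ)+6) * Fn * ((k:ℝ)+5+1) := by ring
      have hexp : Fn * (Real.exp (-1) - ((↑(k+5):ℝ)+2)/(F6 * ((↑(k+5):ℝ)+1)))
          = Fn * Real.exp (-1) - Fn * (((↑(k+5):ℝ)+2)/(F6 * ((↑(k+5):ℝ)+1))) := by ring
      rw [hexp] at h2
      linarith [h2, h4]
    -- upper bound on D2
    have hD2 : D2 ≤ F2 * Real.exp (-1) + F2 * (((k:ℝ)+5)/(F4*((k:ℝ)+4))) := by
      have h := numDer_err (k+3)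
      rw [← hD2d, ← hF2, ← hF4] at h
      have h1 := (abs_le.mp h).2
      have h5 : D2 / F2 ≤ Real.exp (-1) + ((k:ℝ)+5)/(F4*((k:ℝ)+4)) := by
        push_cast at h1 ⊢
        ring_nf at h1 ⊢
        linarith
      calc D2 = F2 * (D2 / F2) := by field_simp
        _ ≤ F2 * (Real.exp (-1) + ((k:ℝ)+5)/(F4*((k:ℝ)+4))) :=
            mul_le_mul_of_nonneg_left h5 hF2pos.le
        _ = F2 * Real.exp (-1) + F2 * (((k:ℝ)+5)/(F4*((k:ℝ)+4))) := by ring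
    -- the half-sum bound
    have hnat : (k+5)*(k+5) - (k+5) = (k+5)*(k+4) := by
      have : (k+5)*(k+5) = (k+5)*(k+4) + (k+5) := by ring
      omega
    have hcast : (((k+5)*(k+5) - (k+5) : ℕ) : ℝ) = ((k:ℝ)+5)*((k:ℝ)+4) := by
      rw [hnat]; push_cast; ring
    have hId1 : (((k:ℝ)+5)*((k:ℝ)+4)/2) * F2 = Fn/2 := by rw [hfn, hf4]; ring
    have hId2 : (((k:ℝ)+5)*((k:ℝ)+4)/2) * (F2 * (((k:ℝ)+5)/(F4*((k:ℝ)+4))))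
        = ((k:ℝ)+5)^2/(2*((k:ℝ)+4)) := by
      rw [hf4]
      have h40 : ((k:ℝ)+4) ≠ 0 := by positivity
      have h20 : F2 ≠ 0 := ne_of_gt hF2pos
      field_simp
    have hhalf : (((k+5)*(k+5) - (k+5) : ℕ) : ℝ)/2 * D2
        ≤ Fn * Real.exp (-1)/2 + ((k:ℝ)+5)^2/(2*((k:ℝ)+4)) := by
      rw [hcast]
      have hC : (0:ℝ) ≤ ((k:ℝ)+5)*((k:ℝ)+4)/2 := by positivity
      calc ((k:ℝ)+5)*((k:ℝ)+4)/2 * D2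
          ≤ ((k:ℝ)+5)*((k:ℝ)+4)/2 * (F2 * Real.exp (-1) + F2 * (((k:ℝ)+5)/(F4*((k:ℝ)+4)))) :=
            mul_le_mul_of_nonneg_left hD2 hC
        _ = (((k:ℝ)+5)*((k:ℝ)+4)/2 * F2) * Real.exp (-1)
            + (((k:ℝ)+5)*((k:ℝ)+4)/2) * (F2 * (((k:ℝ)+5)/(F4*((k:ℝ)+4)))) := by ring
        _ = Fn/2 * Real.exp (-1) + ((k:ℝ)+5)^2/(2*((k:ℝ)+4)) := by rw [hId1, hId2]
        _ = Fn * Real.exp (-1)/2 + ((k:ℝ)+5)^2/(2*((k:ℝ)+4)) := by ring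
    -- combine to lower bound on G
    have hsub : k + 5 - 2 = k + 3 := rfl
    rw [hsub] at hG
    have hGlower : Fn * Real.exp (-1)/2 - 1 - ((k:ℝ)+5)^2/(2*((k:ℝ)+4)) ≤ G := by
      have := hG
      rw [← hD2d] at this
      linarith
    clear_value E N Fn F2 F4 F6 Dn D2
    have hNpos : (0:ℝ) < N := by linarith
    -- final analytic chain
    have hS2 : E * (N-1)^(k+5) ≤ N^(k+5) := by
      have h := epow (k+5) (by omega)
      have hcN : ((k+5:ℕ):ℝ) = N := by rw [hN]; push_cast; ring
      rw [hcN, ← hE] at h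
      exact h
    have hS3 : Real.sqrt Real.pi * (Real.sqrt (2*N) * (N/E)^(k+5)) ≤ Fn := by
      have h := stirling_bound (k+5) (by omega)
      have hcN : ((k+5:ℕ):ℝ) = N := by rw [hN]; push_cast; ring
      rw [hcN, ← hE] at h
      rw [hFn]
      exact h
    have hsqpos : (0:ℝ) < Real.sqrt Real.pi * Real.sqrt (2*N) :=
      mul_pos (Real.sqrt_pos.mpr Real.pi_pos) (Real.sqrt_pos.mpr (by linarith))
    have hS4 : (9:ℝ) ≤ Real.sqrt Real.pi * Real.sqrt (2*N) * Real.sqrt E := by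
      have hstep1 : (31.41592:ℝ) ≤ Real.pi * (2*N) := by
        nlinarith [mul_nonneg (by linarith [Real.pi_gt_d6] : (0:ℝ) ≤ Real.pi - 3.141592)
          (by linarith : (0:ℝ) ≤ 2*N - 10), Real.pi_gt_d6]
      have h81 : (81:ℝ) ≤ Real.pi * (2*N) * E := by
        nlinarith [mul_nonneg (by linarith : (0:ℝ) ≤ Real.pi * (2*N) - 31.41592)
          (by linarith : (0:ℝ) ≤ E - 2.7182818283)]
      have hsqeq : Real.sqrt Real.pi * Real.sqrt (2*N) * Real.sqrt E
          = Real.sqrt (Real.pi * (2*N) * E) := by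
        rw [Real.sqrt_mul (mul_nonneg Real.pi_pos.le (by linarith)), Real.sqrt_mul Real.pi_pos.le]
      rw [hsqeq]
      have h9 : (9:ℝ) = Real.sqrt 81 := by
        rw [show (81:ℝ) = 9^2 by norm_num, Real.sqrt_sq (by norm_num)]
      rw [h9]
      exact Real.sqrt_le_sqrt h81
    have hA : Real.sqrt E * ((N-1)/E)^(k+5)
        ≤ Fn / (Real.sqrt Real.pi * Real.sqrt (2*N) * Real.sqrt E) := by
      rw [le_div_iff₀ (mul_pos hsqpos (Real.sqrt_pos.mpr hEpos))]
      have e2 : ((N-1)/E)^(k+5) * E ≤ (N/E)^(k+5) := by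
        rw [div_pow, div_pow, div_mul_eq_mul_div,
          div_le_div_iff₀ (pow_pos hEpos _) (pow_pos hEpos _)]
        calc (N-1)^(k+5) * E * E^(k+5) = (E * (N-1)^(k+5)) * E^(k+5) := by ring
          _ ≤ N^(k+5) * E^(k+5) := mul_le_mul_of_nonneg_right hS2 (pow_pos hEpos _).le
      calc Real.sqrt E * ((N-1)/E)^(k+5) * (Real.sqrt Real.pi * Real.sqrt (2*N) * Real.sqrt E)
          = (Real.sqrt Real.pi * Real.sqrt (2*N))
              * (((N-1)/E)^(k+5) * (Real.sqrt E * Real.sqrt E)) := by ring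
        _ = (Real.sqrt Real.pi * Real.sqrt (2*N)) * (((N-1)/E)^(k+5) * E) := by rw [hEs]
        _ ≤ (Real.sqrt Real.pi * Real.sqrt (2*N)) * (N/E)^(k+5) :=
            mul_le_mul_of_nonneg_left e2 hsqpos.le
        _ = Real.sqrt Real.pi * (Real.sqrt (2*N) * (N/E)^(k+5)) := by ring
        _ ≤ Fn := hS3
    have hB : Fn / (Real.sqrt Real.pi * Real.sqrt (2*N) * Real.sqrt E) ≤ Fn/9 := by
      apply div_le_div_of_nonneg_left hFnpos.le (by norm_num : (0:ℝ) < 9) hS4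
    have hq : N^2/(2*(N-1)) ≤ 5*N/8 := by
      rw [div_le_div_iff₀ (by linarith) (by norm_num)]
      nlinarith
    have hF24 : 24*N ≤ Fn := by
      have h24 : 24 ≤ (k+4)! := Nat.factorial_le (show 4 ≤ k+4 by omega)
      have hnat2 : 24*(k+5) ≤ (k+5)! := by
        rw [show k+5 = (k+4)+1 from rfl, Nat.factorial_succ]
        calc 24*((k+4)+1) ≤ (k+4)! * ((k+4)+1) := Nat.mul_le_mul_right _ h24
          _ = ((k+4)+1) * (k+4)! := Nat.mul_comm _ _
      calc 24*N = ((24*(k+5) : ℕ) : ℝ) := by rw [hN]; push_cast; ring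
        _ ≤ (((k+5)! : ℕ) : ℝ) := by exact_mod_cast hnat2
        _ = Fn := by rw [hFn]
    have h163 : Fn * (163/900) ≤ Fn * Real.exp (-1)/2 := by
      have hEpos' : (0:ℝ) < Real.exp 1 := by rw [← hE]; exact hEpos
      have hElt' : Real.exp 1 ≤ 2.7182818286 := by rw [← hE]; exact hElt.le
      have hinv : (1:ℝ)/2.7182818286 ≤ (Real.exp 1)⁻¹ := by
        rw [← one_div (Real.exp 1)]
        exact one_div_le_one_div_of_le hEpos' hElt'
      have hinv2 : (163:ℝ)/900 ≤ Real.exp (-1)/2 := by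
        rw [Real.exp_neg]
        linarith
      calc Fn * (163/900) ≤ Fn * (Real.exp (-1)/2) :=
            mul_le_mul_of_nonneg_left hinv2 hFnpos.le
        _ = Fn * Real.exp (-1)/2 := by ring
    have hfinal : Fn/9 ≤ Fn * Real.exp (-1)/2 - 1 - N^2/(2*(N-1)) := by
      linarith [hq, hF24, h163, hN5]
    have heqN : N^2/(2*(N-1)) = ((k:ℝ)+5)^2/(2*((k:ℝ)+4)) := by
      rw [hN]; ring_nf
    have hgc : ((↑(k+5):ℝ) - 1) = N - 1 := by rw [hN]; push_cast; ring
    have hgc2 : ((↑(k+5):ℝ)) = N := by rw [hN]; push_cast; ring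
    calc Real.sqrt E * (((↑(k+5):ℝ) - 1)/E)^(k+5)
        = Real.sqrt E * ((N-1)/E)^(k+5) := by rw [hgc]
      _ ≤ Fn / (Real.sqrt Real.pi * Real.sqrt (2*N) * Real.sqrt E) := hA
      _ ≤ Fn/9 := hB
      _ ≤ Fn * Real.exp (-1)/2 - 1 - N^2/(2*(N-1)) := hfinal
      _ ≤ G := by rw [heqN]; linarith [hGlower]


end Avg

/-- For every odd integer `n > 1` there is an `n×n` tournament matrix `T` with
`per(T) ≥ √e · ((n−1)/(2e))ⁿ`. -/
theorem stmt_18 (n : ℕ) (hn : 1 < n) (hodd : Odd n) :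
    ∃ T : Matrix (Fin n) (Fin n) ℝ,
      (∀ i j, T i j = 0 ∨ T i j = 1) ∧ (∀ i, T i i = 0) ∧
      (∀ i j, i ≠ j → T i j + T j i = 1) ∧
      Real.sqrt (Real.exp 1) * (((n : ℝ) - 1) / (2 * Real.exp 1)) ^ n ≤ perm T := by
  have hn3 : n = 3 ∨ 5 ≤ n := by
    rcases hodd with ⟨m, rfl⟩
    omega
  obtain ⟨u, hu⟩ := Avg.exists_tm n (by omega)
  refine ⟨Avg.TM n u, Avg.TM_zero_one n u, Avg.TM_diag n u,
    fun i j hij => Avg.TM_tour n u i j hij, ?_⟩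
  have hcount := Avg.main_count n
  have hpairs := Avg.pairs_card n
  have hG : (numDerangements n : ℝ) - (((n*n - n : ℕ)):ℝ)/2 * (numDerangements (n-2) : ℝ)
      ≤ ((Avg.good n).card : ℝ) := by
    have h1 : ((n*n - n : ℕ) : ℝ) = 2 * ((Avg.pairs n).card : ℝ) := by
      rw [← hpairs]; push_cast; ring
    rw [h1]
    have h2 : (numDerangements n : ℝ)
        ≤ ((Avg.good n).card : ℝ) + ((Avg.pairs n).card : ℝ) * (numDerangements (n-2) : ℝ) := by
      exact_mod_cast hcount
    linarith
  have hanalytic := Avg.analytic n hn3 _ hG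
  refine le_trans ?_ hu
  have h2pow : (0:ℝ) < 2^n := by positivity
  have hsplit : (((n:ℝ)-1)/(2*Real.exp 1))^n = (((n:ℝ)-1)/Real.exp 1)^n / 2^n := by
    rw [div_pow, div_pow, mul_pow, div_div, mul_comm ((2:ℝ)^n) _]
  rw [hsplit, ← mul_div_assoc]
  exact (div_le_div_iff_of_pos_right h2pow).mpr hanalytic
end

section
/- Let n > 1 be an odd integer and let T be any n×n tournament matrix (a (0,1)-matrix with T_{ii} = 0 for all i and T_{ij} + T_{ji} = 1 for all i ≠ j). Then per(T) ≤ (((n−1)/2)!)^{2n/(n−1)}. -/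
open Nat

open Finset

lemma perm_eq_sum_comp {n : ℕ} (M : Matrix (Fin n) (Fin n) ℝ) :
    perm M = ∑ σ : Equiv.Perm (Fin n), ∏ i, M (σ i) i := by
  unfold perm
  refine Fintype.sum_equiv (Equiv.inv (Equiv.Perm (Fin n))) _ _ fun σ => ?_
  calc ∏ i, M i (σ i) = ∏ i, M (σ⁻¹ (σ i)) (σ i) := by simp
    _ = ∏ i, M (σ⁻¹ i) i := Equiv.prod_comp σ (fun i => M (σ⁻¹ i) i)
    _ = ∏ i, M ((Equiv.inv (Equiv.Perm (Fin n)) σ) i) i := rfl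

lemma perm_transpose {n : ℕ} (M : Matrix (Fin n) (Fin n) ℝ) :
    perm M.transpose = perm M := by
  rw [perm_eq_sum_comp]; rfl

lemma perm_submatrix {n : ℕ} (M : Matrix (Fin n) (Fin n) ℝ) (e f : Equiv.Perm (Fin n)) :
    perm (M.submatrix e f) = perm M := by
  unfold perm
  refine Fintype.sum_equiv (Equiv.trans (Equiv.mulRight e⁻¹) (Equiv.mulLeft f)) _ _ fun σ => ?_
  simp only [Equiv.trans_apply, Equiv.coe_mulRight, Equiv.coe_mulLeft]
  calc ∏ i, M.submatrix e f i (σ i) = ∏ i, M (e i) (f (σ i)) := rfl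
    _ = ∏ i, M (e (e⁻¹ i)) (f (σ (e⁻¹ i))) :=
        (Equiv.prod_comp e⁻¹ (fun i => M (e i) (f (σ i)))).symm
    _ = ∏ i, M i ((f * (σ * e⁻¹) : Equiv.Perm (Fin n)) i) := by
        refine Finset.prod_congr rfl fun i _ => by simp [Equiv.Perm.mul_apply]

lemma perm_expand_col_zero {n : ℕ} (A : Matrix (Fin (n+1)) (Fin (n+1)) ℝ) :
    perm A = ∑ i : Fin (n+1), A i 0 * perm (A.submatrix i.succAbove Fin.succ) := by
  rw [perm_eq_sum_comp, Finset.univ_perm_fin_succ, ← Finset.univ_product_univ]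
  simp only [Finset.sum_map, Equiv.toEmbedding_apply, Finset.sum_product]
  refine Finset.sum_congr rfl fun p _ => Fin.cases ?_ (fun q => ?_) p
  · rw [perm_eq_sum_comp, Finset.mul_sum]
    refine Finset.sum_congr rfl fun σ _ => ?_
    simp only [Fin.prod_univ_succ, Equiv.Perm.decomposeFin_symm_apply_zero,
      Equiv.Perm.decomposeFin_symm_apply_succ, Equiv.swap_self, Equiv.coe_refl, id_eq,
      Matrix.submatrix_apply, Fin.zero_succAbove]
  · rw [perm_eq_sum_comp, Finset.mul_sum]
    refine Fintype.sum_equiv (Equiv.mulLeft q.cycleRange) _ _ fun σ => ?_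
    simp only [Fin.prod_univ_succ, Equiv.Perm.decomposeFin_symm_apply_zero,
      Equiv.Perm.decomposeFin_symm_apply_succ, Matrix.submatrix_apply,
      Equiv.coe_mulLeft, Equiv.Perm.mul_apply, ← Fin.succAbove_cycleRange]

lemma perm_expand_col {n : ℕ} (A : Matrix (Fin (n+1)) (Fin (n+1)) ℝ) (k : Fin (n+1)) :
    perm A = ∑ i : Fin (n+1), A i k * perm (A.submatrix i.succAbove k.succAbove) := by
  classical
  set e : Equiv.Perm (Fin (n+1)) := (finSuccEquiv n).trans (finSuccEquiv' k).symm with he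
  have h0 : e 0 = k := by simp [he]
  have hs : ∀ j : Fin n, e j.succ = k.succAbove j := by
    intro j; simp [he]
  have := perm_submatrix A (Equiv.refl _) e
  rw [← this, perm_expand_col_zero]
  refine Finset.sum_congr rfl fun i _ => ?_
  have hsub : ((A.submatrix ⇑(Equiv.refl (Fin (n+1))) ⇑e).submatrix i.succAbove Fin.succ)
      = A.submatrix i.succAbove k.succAbove := by
    ext a b
    simp [Matrix.submatrix_apply, hs]
  rw [hsub]
  simp [Matrix.submatrix_apply, h0]

lemma perm_expand_row {n : ℕ} (A : Matrix (Fin (n+1)) (Fin (n+1)) ℝ) (i : Fin (n+1)) :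
    perm A = ∑ k : Fin (n+1), A i k * perm (A.submatrix i.succAbove k.succAbove) := by
  rw [← perm_transpose A, perm_expand_col A.transpose i]
  refine Finset.sum_congr rfl fun k _ => ?_
  rw [Matrix.transpose_apply, ← Matrix.transpose_submatrix, perm_transpose]

lemma perm_nonneg {n : ℕ} (M : Matrix (Fin n) (Fin n) ℝ) (h : ∀ i j, 0 ≤ M i j) :
    0 ≤ perm M :=
  Finset.sum_nonneg fun σ _ => Finset.prod_nonneg fun i _ => h i (σ i)

lemma perm_zero_row {n : ℕ} (M : Matrix (Fin n) (Fin n) ℝ) (i : Fin n)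
    (h : ∀ j, M i j = 0) : perm M = 0 := by
  unfold perm
  refine Finset.sum_eq_zero fun σ _ => Finset.prod_eq_zero (Finset.mem_univ i) (h (σ i))

/-- number of ones in row `i` -/
noncomputable def rc {n : ℕ} (A : Matrix (Fin n) (Fin n) ℝ) (i : Fin n) : ℕ :=
  ∑ j, if A i j = 1 then 1 else 0

noncomputable def fLog (r : ℕ) : ℝ := Real.log (r !) / r

lemma fLog_mul_self (s : ℕ) : fLog s * s = Real.log (s !) := by
  rcases Nat.eq_zero_or_pos s with h | h
  · simp [h, fLog]
  · rw [fLog, div_mul_cancel₀]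
    exact Nat.cast_ne_zero.2 h.ne'

lemma fLog_nonneg (s : ℕ) : 0 ≤ fLog s := by
  apply div_nonneg _ (Nat.cast_nonneg _)
  apply Real.log_nonneg
  exact_mod_cast Nat.one_le_iff_ne_zero.2 (Nat.factorial_ne_zero s)

lemma sum_succAbove_erase {n : ℕ} (g : Fin (n+1) → ℝ) (i : Fin (n+1)) :
    ∑ j : Fin n, g (i.succAbove j) = ∑ j ∈ Finset.univ.erase i, g j := by
  have h1 := Fin.sum_univ_succAbove g i
  have h2 : g i + ∑ j ∈ Finset.univ.erase i, g j = ∑ j, g j :=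
    Finset.add_sum_erase _ g (Finset.mem_univ i)
  linarith

lemma sum_erase_comm {N : ℕ} (H : Fin N → Fin N → ℝ) :
    ∑ i, ∑ j ∈ Finset.univ.erase i, H i j = ∑ j, ∑ i ∈ Finset.univ.erase j, H i j := by
  have h : ∀ (G : Fin N → Fin N → ℝ) (i : Fin N),
      ∑ j ∈ Finset.univ.erase i, G i j = (∑ j, G i j) - G i i := fun G i =>
    Finset.sum_erase_eq_sub (Finset.mem_univ i)
  calc ∑ i, ∑ j ∈ Finset.univ.erase i, H i j = ∑ i, ((∑ j, H i j) - H i i) := by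
        refine Finset.sum_congr rfl fun i _ => h H i
    _ = (∑ i, ∑ j, H i j) - ∑ i, H i i := by rw [Finset.sum_sub_distrib]
    _ = (∑ j, ∑ i, H i j) - ∑ i, H i i := by rw [Finset.sum_comm]
    _ = ∑ j, ((∑ i, H i j) - H j j) := by rw [Finset.sum_sub_distrib]
    _ = ∑ j, ∑ i ∈ Finset.univ.erase j, H i j := by
        refine Finset.sum_congr rfl fun j _ => (h (fun j i => H i j) j).symm

/-- key convexity inequality: `s log s ≤ s log r + ∑ t log t`. -/
lemma convexity_lemma {ι : Type*} (S : Finset ι) (t : ι → ℝ) (ht : ∀ a ∈ S, 0 ≤ t a)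
    (r : ℕ) (hcard : S.card ≤ r) (hr : 1 ≤ r) :
    (∑ a ∈ S, t a) * Real.log (∑ a ∈ S, t a) ≤
      (∑ a ∈ S, t a) * Real.log r + ∑ a ∈ S, t a * Real.log (t a) := by
  set s := ∑ a ∈ S, t a with hs
  have hs0 : 0 ≤ s := Finset.sum_nonneg ht
  have hrR : (0:ℝ) < r := by exact_mod_cast hr
  rcases eq_or_lt_of_le hs0 with h0 | hpos
  · have hall : ∀ a ∈ S, t a = 0 := by
      intro a ha
      exact (Finset.sum_eq_zero_iff_of_nonneg ht).1 h0.symm a ha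
    rw [← h0]
    have : ∑ a ∈ S, t a * Real.log (t a) = 0 :=
      Finset.sum_eq_zero fun a ha => by rw [hall a ha]; ring
    rw [this]; simp
  · have key : ∀ a ∈ S, t a * (Real.log s - Real.log r - Real.log (t a)) ≤ s / r - t a := by
      intro a ha
      rcases eq_or_lt_of_le (ht a ha) with h0 | hta
      · rw [← h0]
        simp only [zero_mul, sub_zero]
        positivity
      · have hx : 0 < s / (r * t a) := by positivity
        have hlog : Real.log (s / (r * t a)) ≤ s / (r * t a) - 1 :=
          Real.log_le_sub_one_of_pos hx
        have hexpand : Real.log (s / (r * t a)) =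
            Real.log s - Real.log r - Real.log (t a) := by
          rw [Real.log_div (ne_of_gt hpos) (by positivity), Real.log_mul (ne_of_gt hrR) (ne_of_gt hta)]
          ring
        rw [← hexpand]
        have := mul_le_mul_of_nonneg_left hlog (le_of_lt hta)
        calc t a * Real.log (s / (r * t a)) ≤ t a * (s / (r * t a) - 1) := this
          _ = s / r - t a := by field_simp
    have hsum := Finset.sum_le_sum key
    have e1 : s * Real.log s = ∑ a ∈ S, t a * Real.log s := by rw [hs, Finset.sum_mul]
    have e2 : s * Real.log r = ∑ a ∈ S, t a * Real.log r := by rw [hs, Finset.sum_mul]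
    have hL : ∑ a ∈ S, t a * (Real.log s - Real.log r - Real.log (t a)) =
        s * Real.log s - s * Real.log r - ∑ a ∈ S, t a * Real.log (t a) := by
      rw [e1, e2, ← Finset.sum_sub_distrib, ← Finset.sum_sub_distrib]
      refine Finset.sum_congr rfl fun a _ => by ring
    have hR : ∑ a ∈ S, (s / r - t a) ≤ 0 := by
      rw [Finset.sum_sub_distrib, Finset.sum_const, nsmul_eq_mul]
      have h1 : (S.card : ℝ) * (s / r) ≤ r * (s / r) := by
        apply mul_le_mul_of_nonneg_right _ (by positivity)
        exact_mod_cast hcard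
      have h2 : (r:ℝ) * (s / r) = s := by field_simp
      rw [← hs]
      linarith
    rw [hL] at hsum
    linarith
theorem bregman : ∀ n : ℕ, ∀ A : Matrix (Fin n) (Fin n) ℝ,
    (∀ i j, A i j = 0 ∨ A i j = 1) → perm A ≤ Real.exp (∑ i, fLog (rc A i)) := by
  intro n
  induction n with
  | zero =>
    intro A _
    have h1 : perm A = 1 := by simp [perm]
    rw [h1]
    simp
  | succ n IH =>
    intro A h01
    by_cases hzero : ∃ i, rc A i = 0
    · obtain ⟨i, hi⟩ := hzero
      have hrow : ∀ j, A i j = 0 := by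
        intro j
        rcases h01 i j with h | h
        · exact h
        · exfalso
          have hle : (if A i j = 1 then 1 else 0) ≤ rc A i :=
            Finset.single_le_sum (f := fun j => if A i j = 1 then 1 else 0)
              (fun _ _ => Nat.zero_le _) (Finset.mem_univ j)
          rw [if_pos h] at hle
          omega
      rw [perm_zero_row A i hrow]
      positivity
    · push_neg at hzero
      have hr1 : ∀ i, 1 ≤ rc A i := fun i => Nat.one_le_iff_ne_zero.2 (hzero i)
      have hApos : ∀ i j, 0 ≤ A i j := by
        intro i j; rcases h01 i j with h | h <;> rw [h] <;> norm_num
      have hp0 : 0 ≤ perm A := perm_nonneg A hApos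
      rcases eq_or_lt_of_le hp0 with hp | hp
      · rw [← hp]; positivity
      set p := perm A with hpdef
      set t : Fin (n+1) → Fin (n+1) → ℝ :=
        fun i k => A i k * perm (A.submatrix i.succAbove k.succAbove) with htdef
      set F : Fin (n+1) → Fin (n+1) → ℝ :=
        fun j k => fLog (rc A j - (if A j k = 1 then 1 else 0)) with hFdef
      have f1 : ∀ i, ∑ k, t i k = p := fun i => (perm_expand_row A i).symm
      have f2 : ∀ k, ∑ i, t i k = p := fun k => (perm_expand_col A k).symm
      have fm : ∀ (i k : Fin (n+1)), 0 ≤ perm (A.submatrix i.succAbove k.succAbove) := fun i k =>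
        perm_nonneg _ (fun a b => hApos _ _)
      have f3 : ∀ i k, 0 ≤ t i k := fun i k => mul_nonneg (hApos i k) (fm i k)
      have f5 : ∀ (i : Fin (n+1)) (g : Fin (n+1) → ℝ), (∀ k, A i k = 0 → g k = 0) →
          ∑ k ∈ Finset.univ.filter (fun k => A i k = 1), g k = ∑ k, g k := by
        intro i g hg
        rw [Finset.sum_filter]
        refine Finset.sum_congr rfl fun k _ => ?_
        rcases h01 i k with h | h
        · rw [if_neg (by rw [h]; norm_num), hg k h]
        · rw [if_pos h]
      have f6 : ∀ i, (Finset.univ.filter (fun k => A i k = 1)).card = rc A i := by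
        intro i
        rw [Finset.card_filter]
        rfl
      have f7 : ∀ (i k : Fin (n+1)) (j : Fin n),
          rc (A.submatrix i.succAbove k.succAbove) j
            = rc A (i.succAbove j) - (if A (i.succAbove j) k = 1 then 1 else 0) := by
        intro i k j
        have expand := Fin.sum_univ_succAbove
          (fun c => if A (i.succAbove j) c = 1 then (1:ℕ) else 0) k
        have h1 : rc (A.submatrix i.succAbove k.succAbove) j
            = ∑ c : Fin n, (if A (i.succAbove j) (k.succAbove c) = 1 then (1:ℕ) else 0) := rfl
        have h2 : rc A (i.succAbove j)
            = ∑ c : Fin (n+1), (if A (i.succAbove j) c = 1 then (1:ℕ) else 0) := rfl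
        omega
      -- step (1): convexity applied to row i
      have step1 : ∀ i, p * Real.log p ≤ p * Real.log (rc A i)
          + ∑ k, t i k * Real.log (t i k) := by
        intro i
        have hzg : ∀ k, A i k = 0 → t i k = 0 := by
          intro k h; rw [htdef]; simp [h]
        have hzg2 : ∀ k, A i k = 0 → t i k * Real.log (t i k) = 0 := by
          intro k h; rw [hzg k h]; simp
        have := convexity_lemma (Finset.univ.filter (fun k => A i k = 1)) (t i)
          (fun a _ => f3 i a) (rc A i) (le_of_eq (f6 i)) (hr1 i)
        rw [f5 i (t i) hzg, f5 i (fun k => t i k * Real.log (t i k)) hzg2, f1 i] at this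
        exact this
      -- step (2): IH applied to each minor
      have step2 : ∀ i k, t i k * Real.log (t i k)
          ≤ t i k * (∑ j ∈ Finset.univ.erase i, F j k) := by
        intro i k
        rcases h01 i k with h | h
        · have : t i k = 0 := by rw [htdef]; simp [h]
          rw [this]; simp
        · have ht1 : t i k = perm (A.submatrix i.succAbove k.succAbove) := by
            rw [htdef]; simp [h]
          rcases eq_or_lt_of_le (fm i k) with hm | hm
          · rw [ht1, ← hm]; simp
          · have hIH := IH (A.submatrix i.succAbove k.succAbove)
              (fun a b => h01 _ _)
            have hsum : ∑ j : Fin n, fLog (rc (A.submatrix i.succAbove k.succAbove) j)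
                = ∑ j ∈ Finset.univ.erase i, F j k := by
              rw [← sum_succAbove_erase (fun j => F j k) i]
              refine Finset.sum_congr rfl fun j _ => ?_
              rw [hFdef]
              simp only [f7 i k j]
            have hlog : Real.log (t i k) ≤ ∑ j ∈ Finset.univ.erase i, F j k := by
              rw [ht1]
              calc Real.log (perm (A.submatrix i.succAbove k.succAbove))
                  ≤ Real.log (Real.exp (∑ j, fLog (rc (A.submatrix i.succAbove k.succAbove) j))) :=
                    Real.log_le_log hm hIH
                _ = ∑ j ∈ Finset.univ.erase i, F j k := by rw [Real.log_exp, hsum]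
            exact mul_le_mul_of_nonneg_left hlog (f3 i k)
      -- combine
      have main : ∀ i, p * Real.log p ≤ p * Real.log (rc A i)
          + ∑ k, t i k * (∑ j ∈ Finset.univ.erase i, F j k) := by
        intro i
        refine le_trans (step1 i) (add_le_add_right (Finset.sum_le_sum fun k _ => step2 i k) _)
      have total : ((n:ℝ)+1) * (p * Real.log p)
          ≤ ∑ i : Fin (n+1), (p * Real.log (rc A i)
            + ∑ k, t i k * (∑ j ∈ Finset.univ.erase i, F j k)) := by
        calc ((n:ℝ)+1) * (p * Real.log p) = ∑ _i : Fin (n+1), p * Real.log p := by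
              rw [Finset.sum_const, Finset.card_univ, Fintype.card_fin, nsmul_eq_mul]
              push_cast; ring
          _ ≤ _ := Finset.sum_le_sum fun i _ => main i
      -- step (4): rearrange the double sum
      have hX : ∑ i, ∑ k, t i k * (∑ j ∈ Finset.univ.erase i, F j k)
          = ∑ j, ∑ k, (p - t j k) * F j k := by
        calc ∑ i, ∑ k, t i k * (∑ j ∈ Finset.univ.erase i, F j k)
            = ∑ i, ∑ j ∈ Finset.univ.erase i, ∑ k, t i k * F j k := by
              refine Finset.sum_congr rfl fun i _ => ?_
              calc ∑ k, t i k * (∑ j ∈ Finset.univ.erase i, F j k)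
                  = ∑ k, ∑ j ∈ Finset.univ.erase i, t i k * F j k :=
                    Finset.sum_congr rfl fun k _ => Finset.mul_sum _ _ _
                _ = ∑ j ∈ Finset.univ.erase i, ∑ k, t i k * F j k := Finset.sum_comm
          _ = ∑ j, ∑ i ∈ Finset.univ.erase j, ∑ k, t i k * F j k :=
              sum_erase_comm (fun i j => ∑ k, t i k * F j k)
          _ = ∑ j, ∑ k, ∑ i ∈ Finset.univ.erase j, t i k * F j k :=
              Finset.sum_congr rfl fun j _ => Finset.sum_comm
          _ = ∑ j, ∑ k, (p - t j k) * F j k := by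
              refine Finset.sum_congr rfl fun j _ => Finset.sum_congr rfl fun k _ => ?_
              rw [← Finset.sum_mul]
              congr 1
              rw [Finset.sum_erase_eq_sub (Finset.mem_univ j), f2 k]
      -- step (5): evaluate each row contribution
      have hY : ∀ j : Fin (n+1), p * Real.log (rc A j) + ∑ k, (p - t j k) * F j k
          = ((n:ℝ)+1) * (p * fLog (rc A j)) := by
        intro j
        have hsum1 : ∑ k ∈ Finset.univ.filter (fun k => A j k = 1), (p - t j k)
            = (rc A j : ℝ) * p - p := by
          rw [Finset.sum_sub_distrib, Finset.sum_const, f6, nsmul_eq_mul]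
          congr 1
          have hz : ∀ k, A j k = 0 → t j k = 0 := by
            intro k h; rw [htdef]; simp [h]
          rw [f5 j (t j) hz, f1 j]
        have hcard2 : ((Finset.univ.filter (fun k => ¬ A j k = 1)).card : ℝ)
            = ((n:ℝ)+1) - rc A j := by
          have := Finset.card_filter_add_card_filter_not
            (s := (Finset.univ : Finset (Fin (n+1)))) (p := fun k => A j k = 1)
          rw [Finset.card_univ, Fintype.card_fin, f6] at this
          have hle : rc A j ≤ n + 1 := by omega
          push_cast
          have : (Finset.univ.filter (fun k => ¬ A j k = 1)).card = n + 1 - rc A j := by omega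
          rw [this]
          push_cast [Nat.cast_sub hle]
          ring
        have hsplit : ∑ k, (p - t j k) * F j k
            = ((rc A j : ℝ) * p - p) * fLog (rc A j - 1)
              + (((n:ℝ)+1) - rc A j) * (p * fLog (rc A j)) := by
          have hterm : ∀ k, (p - t j k) * F j k
              = if A j k = 1 then (p - t j k) * fLog (rc A j - 1)
                else p * fLog (rc A j) := by
            intro k
            rcases h01 j k with h | h
            · have hne : ¬ A j k = 1 := by rw [h]; norm_num
              rw [if_neg hne]
              have ht0 : t j k = 0 := by rw [htdef]; simp [h]
              rw [hFdef]
              simp only [if_neg hne, Nat.sub_zero, ht0, sub_zero]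
            · rw [if_pos h, hFdef]
              simp only [if_pos h]
          calc ∑ k, (p - t j k) * F j k
              = ∑ k, (if A j k = 1 then (p - t j k) * fLog (rc A j - 1)
                  else p * fLog (rc A j)) := Finset.sum_congr rfl fun k _ => hterm k
            _ = (∑ k ∈ Finset.univ.filter (fun k => A j k = 1), (p - t j k) * fLog (rc A j - 1))
                + ∑ k ∈ Finset.univ.filter (fun k => ¬ A j k = 1), p * fLog (rc A j) :=
                Finset.sum_ite _ _
            _ = ((rc A j : ℝ) * p - p) * fLog (rc A j - 1)
                + (((n:ℝ)+1) - rc A j) * (p * fLog (rc A j)) := by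
                rw [← Finset.sum_mul, hsum1, Finset.sum_const, nsmul_eq_mul, hcard2]
        rw [hsplit]
        -- arithmetic identity
        have hr := hr1 j
        have hrc : (1:ℝ) ≤ (rc A j : ℝ) := by exact_mod_cast hr
        have e1 : fLog (rc A j - 1) * ((rc A j : ℝ) - 1) = Real.log ((rc A j - 1)!) := by
          have : ((rc A j - 1 : ℕ) : ℝ) = (rc A j : ℝ) - 1 := by
            push_cast [Nat.cast_sub hr]; ring
          rw [← this]
          exact fLog_mul_self _
        have e2 : fLog (rc A j) * (rc A j : ℝ) = Real.log ((rc A j)!) := fLog_mul_self _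
        have e3 : Real.log ((rc A j)!) = Real.log (rc A j) + Real.log ((rc A j - 1)!) := by
          obtain ⟨s, hs⟩ : ∃ s, rc A j = s + 1 := ⟨rc A j - 1, by omega⟩
          rw [hs]
          simp only [Nat.add_sub_cancel, Nat.factorial_succ]
          push_cast
          rw [Real.log_mul (by positivity) (by exact_mod_cast Nat.factorial_ne_zero s)]
        linear_combination p * e1 - p * e2 - p * e3
      -- step (6): conclude
      have hs : ((n:ℝ)+1) * (p * Real.log p) ≤ ((n:ℝ)+1) * (p * ∑ i, fLog (rc A i)) := by
        calc ((n:ℝ)+1) * (p * Real.log p)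
            ≤ ∑ i : Fin (n+1), (p * Real.log (rc A i)
              + ∑ k, t i k * (∑ j ∈ Finset.univ.erase i, F j k)) := total
          _ = (∑ i : Fin (n+1), p * Real.log (rc A i))
              + ∑ i, ∑ k, t i k * (∑ j ∈ Finset.univ.erase i, F j k) := by
              rw [Finset.sum_add_distrib]
          _ = ∑ j : Fin (n+1), (p * Real.log (rc A j) + ∑ k, (p - t j k) * F j k) := by
              rw [hX, Finset.sum_add_distrib]
          _ = ∑ j : Fin (n+1), ((n:ℝ)+1) * (p * fLog (rc A j)) :=
              Finset.sum_congr rfl fun j _ => hY j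
          _ = ((n:ℝ)+1) * (p * ∑ i, fLog (rc A i)) := by
              rw [← Finset.mul_sum, ← Finset.mul_sum]
      have hlogp : Real.log p ≤ ∑ i, fLog (rc A i) := by
        have hn1 : (0:ℝ) < (n:ℝ)+1 := by positivity
        have h2 := le_of_mul_le_mul_left hs hn1
        exact le_of_mul_le_mul_left h2 hp
      calc p = Real.exp (Real.log p) := (Real.exp_log hp).symm
        _ ≤ Real.exp (∑ i, fLog (rc A i)) := Real.exp_le_exp.2 hlogp
open Nat Finset
lemma log_succ_ge (r : ℕ) (hr : 1 ≤ r) :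
    1 / ((r:ℝ)+1) ≤ Real.log ((r:ℝ)+1) - Real.log r := by
  have hrp : (0:ℝ) < r := by exact_mod_cast hr
  have hx : (0:ℝ) < r / ((r:ℝ)+1) := by positivity
  have h := Real.log_le_sub_one_of_pos hx
  have hlog : Real.log ((r:ℝ) / ((r:ℝ)+1)) = Real.log r - Real.log ((r:ℝ)+1) :=
    Real.log_div (ne_of_gt hrp) (by positivity)
  rw [hlog] at h
  have : (r:ℝ) / ((r:ℝ)+1) - 1 = -(1 / ((r:ℝ)+1)) := by field_simp; ring
  linarith [this ▸ h]

lemma log_succ_le (r : ℕ) (hr : 1 ≤ r) :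
    Real.log ((r:ℝ)+1) - Real.log r ≤ 1 / (r:ℝ) := by
  have hrp : (0:ℝ) < r := by exact_mod_cast hr
  have hx : (0:ℝ) < ((r:ℝ)+1) / r := by positivity
  have h := Real.log_le_sub_one_of_pos hx
  have hlog : Real.log (((r:ℝ)+1) / r) = Real.log ((r:ℝ)+1) - Real.log r :=
    Real.log_div (by positivity) (ne_of_gt hrp)
  rw [hlog] at h
  have : ((r:ℝ)+1) / r - 1 = 1 / (r:ℝ) := by field_simp; ring
  linarith [this ▸ h]

/-- `2 log(r!) ≤ 2 r log r - (r-1)` for `r ≥ 1`. -/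
lemma two_log_factorial_le : ∀ r : ℕ, 1 ≤ r →
    2 * Real.log (r !) ≤ 2 * r * Real.log r - ((r:ℝ) - 1) := by
  intro r hr
  induction r, hr using Nat.le_induction with
  | base => simp
  | succ r hr IH =>
    have hkey := log_succ_ge r hr
    have hrp : (0:ℝ) < r := by exact_mod_cast hr
    have hfact : Real.log ((r+1)!) = Real.log ((r:ℝ)+1) + Real.log (r !) := by
      rw [Nat.factorial_succ]
      push_cast
      rw [Real.log_mul (by positivity) (by exact_mod_cast Nat.factorial_ne_zero r)]
    push_cast
    rw [hfact]
    push_cast at IH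
    -- need: 2(logR1 + L) ≤ 2(R+1) logR1 - R  where 2L ≤ 2R logR - (R-1)
    -- suffices 2R logR + 1 ≤ 2R logR1, from hkey : 1/(R+1) ≤ logR1 - logR
    have h2 : 2 * (r:ℝ) * (Real.log ((r:ℝ)+1) - Real.log r) ≥ 2 * (r:ℝ) / ((r:ℝ)+1) := by
      rw [ge_iff_le, div_le_iff₀ (by positivity)]
      calc 2 * (r:ℝ) = (2 * (r:ℝ)) * ((1:ℝ) / ((r:ℝ)+1)) * ((r:ℝ)+1) := by field_simp
        _ ≤ (2 * (r:ℝ)) * (Real.log ((r:ℝ)+1) - Real.log r) * ((r:ℝ)+1) := by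
            apply mul_le_mul_of_nonneg_right _ (by positivity)
            exact mul_le_mul_of_nonneg_left hkey (by positivity)
    have hr1 : (1:ℝ) ≤ (r:ℝ) := by exact_mod_cast hr
    have h3 : (1:ℝ) ≤ 2 * (r:ℝ) / ((r:ℝ)+1) := by
      rw [le_div_iff₀ (by positivity)]
      linarith
    nlinarith [IH]


lemma log_factorial_succ (r : ℕ) :
    Real.log ((r+1)!) = Real.log ((r:ℝ)+1) + Real.log (r !) := by
  rw [Nat.factorial_succ]
  push_cast
  rw [Real.log_mul (by positivity) (by exact_mod_cast Nat.factorial_ne_zero r)]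

lemma fLog_succ_eq (r : ℕ) :
    fLog (r+1) = (Real.log (r !) + Real.log ((r:ℝ)+1)) / ((r:ℝ)+1) := by
  rw [fLog, log_factorial_succ]
  push_cast
  ring

/-- concavity step for `fLog`. -/
lemma fLog_concave_step : ∀ r : ℕ, 2 ≤ r → fLog (r+1) + fLog (r-1) ≤ 2 * fLog r := by
  intro r hr
  obtain ⟨s, hs⟩ : ∃ s, r = s + 1 := ⟨r - 1, by omega⟩
  subst hs
  have hs1 : 1 ≤ s := by omega
  have hS : (1:ℝ) ≤ (s:ℝ) := by exact_mod_cast hs1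
  have hSpos : (0:ℝ) < (s:ℝ) := by linarith
  set S : ℝ := (s:ℝ) with hSdef
  set L : ℝ := Real.log (s !) with hL
  set X : ℝ := Real.log (S+1) with hX
  set Y : ℝ := Real.log (S+2) with hY
  have h4 : Real.log ((s+1)!) = X + L := by
    rw [log_factorial_succ s]
  have h1 : fLog (s+1+1) = (X + L + Y) / (S+2) := by
    rw [fLog_succ_eq (s+1), h4]
    have c1 : ((s+1:ℕ):ℝ) + 1 = S + 2 := by push_cast; ring
    rw [c1]
  have h2 : fLog (s+1-1) = L / S := by
    simp only [Nat.add_sub_cancel, fLog, hL, hSdef]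
  have h3 : fLog (s+1) = (L + X) / (S+1) := by
    rw [fLog_succ_eq s]
  rw [h1, h2, h3]
  -- key facts
  have K1 : 2 * L ≤ 2 * S * X - S := by
    have h6 := two_log_factorial_le (s+1) (by omega)
    rw [h4] at h6
    have c1 : ((s+1:ℕ):ℝ) = S + 1 := by push_cast; ring
    rw [c1] at h6
    rw [← hX] at h6
    linarith
  have K2 : S * (S+1) * Y ≤ S * (S+1) * X + S := by
    have h7 := log_succ_le (s+1) (by omega)
    have c1 : ((s+1:ℕ):ℝ) = S + 1 := by push_cast; ring
    rw [c1] at h7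
    have c2 : S + 1 + 1 = S + 2 := by ring
    rw [c2, ← hY, ← hX] at h7
    have h8 : S * (S+1) * (Y - X) ≤ S * (S+1) * (1/(S+1)) := by
      apply mul_le_mul_of_nonneg_left h7 (by positivity)
    have h9 : S * (S+1) * (1/(S+1)) = S := by field_simp
    nlinarith [h8]
  rw [div_add_div _ _ (by positivity : S+2 ≠ 0) (ne_of_gt hSpos), mul_div_assoc',
    div_le_div_iff₀ (by positivity) (by positivity)]
  nlinarith [K1, K2]

noncomputable def dL (r : ℕ) : ℝ := fLog (r+1) - fLog r

lemma dL_antitone : ∀ a b : ℕ, 1 ≤ a → a ≤ b → dL b ≤ dL a := by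
  intro a b ha hab
  induction b, hab using Nat.le_induction with
  | base => exact le_refl _
  | succ b hab IH =>
    have step : dL (b+1) ≤ dL b := by
      have h := fLog_concave_step (b+1) (by omega)
      simp only [Nat.add_sub_cancel] at h
      unfold dL
      linarith
    exact le_trans step IH

lemma tangent_above (k : ℕ) (hk : 1 ≤ k) : ∀ a, k ≤ a →
    fLog a ≤ fLog k + ((a:ℝ) - k) * dL k := by
  intro a ha
  induction a, ha using Nat.le_induction with
  | base => simp
  | succ a ha IH =>
    have hd : dL a ≤ dL k := dL_antitone k a hk ha
    have he : fLog (a+1) = fLog a + dL a := by unfold dL; ring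
    rw [he]
    push_cast
    linarith

lemma tangent_below (k : ℕ) (hk : 1 ≤ k) : ∀ m a, 1 ≤ a → a + m = k →
    fLog a ≤ fLog k + ((a:ℝ) - k) * dL k := by
  intro m
  induction m with
  | zero =>
    intro a ha hak
    have : a = k := by omega
    subst this
    simp
  | succ m IH =>
    intro a ha hak
    have IH2 := IH (a+1) (by omega) (by omega)
    have hd : dL k ≤ dL a := dL_antitone a k ha (by omega)
    have he : fLog a = fLog (a+1) - dL a := by unfold dL; ring
    rw [he]
    push_cast at IH2 ⊢
    linarith

lemma tangent (k a : ℕ) (hk : 1 ≤ k) (ha : 1 ≤ a) :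
    fLog a ≤ fLog k + ((a:ℝ) - k) * dL k := by
  rcases le_total k a with h | h
  · exact tangent_above k hk a h
  · exact tangent_below k hk (k - a) a ha (by omega)
/-- For every odd integer `n > 1` and every `n×n` tournament matrix `T`,
`per(T) ≤ (((n−1)/2)!)^{2n/(n−1)}`. -/
theorem stmt_19 (n : ℕ) (hn : 1 < n) (hodd : Odd n) (T : Matrix (Fin n) (Fin n) ℝ)
    (h01 : ∀ i j, T i j = 0 ∨ T i j = 1) (hdiag : ∀ i, T i i = 0)
    (htour : ∀ i j, i ≠ j → T i j + T j i = 1) :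
    perm T ≤ ((((n - 1) / 2)!) : ℝ) ^ ((2 * (n : ℝ)) / ((n : ℝ) - 1)) := by
  obtain ⟨k, hk⟩ := hodd
  have hk1 : 1 ≤ k := by omega
  have hhalf : (n - 1) / 2 = k := by omega
  rw [hhalf]
  have hfac : (0:ℝ) < (k ! : ℝ) := by exact_mod_cast k.factorial_pos
  by_cases hzero : ∃ i, rc T i = 0
  · obtain ⟨i, hi⟩ := hzero
    have hrow : ∀ j, T i j = 0 := by
      intro j
      rcases h01 i j with h | h
      · exact h
      · exfalso
        have hle : (if T i j = 1 then 1 else 0) ≤ rc T i :=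
          Finset.single_le_sum (f := fun j => if T i j = 1 then 1 else 0)
            (fun _ _ => Nat.zero_le _) (Finset.mem_univ j)
        rw [if_pos h] at hle
        omega
    rw [perm_zero_row T i hrow]
    positivity
  · push_neg at hzero
    have hr1 : ∀ i, 1 ≤ rc T i := fun i => Nat.one_le_iff_ne_zero.2 (hzero i)
    -- counting: the row sums add up to n*k
    have hdouble : 2 * ∑ i, rc T i = n * (n - 1) := by
      have e2 : ∑ i : Fin n, ∑ j : Fin n, (if T j i = 1 then (1:ℕ) else 0)
          = ∑ i : Fin n, ∑ j : Fin n, (if T i j = 1 then (1:ℕ) else 0) := Finset.sum_comm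
      have e3 : 2 * ∑ i, rc T i = ∑ i : Fin n, ∑ j : Fin n,
          ((if T i j = 1 then (1:ℕ) else 0) + (if T j i = 1 then (1:ℕ) else 0)) := by
        have : ∀ i : Fin n, rc T i = ∑ j, (if T i j = 1 then (1:ℕ) else 0) := fun i => rfl
        simp only [Finset.sum_add_distrib, this, e2]
        ring
      have e4 : ∀ i j : Fin n,
          ((if T i j = 1 then (1:ℕ) else 0) + (if T j i = 1 then (1:ℕ) else 0))
            = if i = j then 0 else 1 := by
        intro i j
        by_cases hij : i = j
        · subst hij
          rw [if_pos rfl, if_neg (by rw [hdiag i]; norm_num)]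
        · rw [if_neg hij]
          rcases h01 i j with h1 | h1 <;> rcases h01 j i with h2 | h2
          · exfalso; have := htour i j hij; rw [h1, h2] at this; norm_num at this
          · rw [if_neg (by rw [h1]; norm_num), if_pos h2]
          · rw [if_pos h1, if_neg (by rw [h2]; norm_num)]
          · exfalso; have := htour i j hij; rw [h1, h2] at this; norm_num at this
      have e5 : ∀ i : Fin n, (∑ j : Fin n, if i = j then (0:ℕ) else 1) = n - 1 := by
        intro i
        rw [Finset.sum_ite]
        simp only [Finset.sum_const_zero, Finset.sum_const, smul_eq_mul, mul_one, zero_add]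
        have hpa := Finset.card_filter_add_card_filter_not
          (s := (Finset.univ : Finset (Fin n))) (p := fun j => i = j)
        have hone : (Finset.univ.filter (fun j => i = j)).card = 1 := by
          have : Finset.univ.filter (fun j => i = j) = {i} := by
            ext j
            simp [eq_comm]
          rw [this, Finset.card_singleton]
        rw [Finset.card_univ, Fintype.card_fin, hone] at hpa
        omega
      rw [e3]
      calc ∑ i : Fin n, ∑ j : Fin n,
            ((if T i j = 1 then (1:ℕ) else 0) + (if T j i = 1 then (1:ℕ) else 0))
          = ∑ i : Fin n, ∑ j : Fin n, (if i = j then (0:ℕ) else 1) := by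
            exact Finset.sum_congr rfl fun i _ => Finset.sum_congr rfl fun j _ => e4 i j
        _ = ∑ _i : Fin n, (n - 1) := Finset.sum_congr rfl fun i _ => e5 i
        _ = n * (n - 1) := by rw [Finset.sum_const, Finset.card_univ, Fintype.card_fin, smul_eq_mul]
    have hsum : ∑ i, rc T i = n * k := by
      have h1 : n - 1 = 2 * k := by omega
      rw [h1] at hdouble
      have : n * (2 * k) = 2 * (n * k) := by ring
      omega
    have hsumR : ∑ i, ((rc T i : ℝ)) = (n:ℝ) * k := by
      rw [← Nat.cast_sum]
      rw [hsum]
      push_cast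
      ring
    -- tangent line bound
    have htan : ∑ i, fLog (rc T i) ≤ (n:ℝ) * fLog k := by
      calc ∑ i, fLog (rc T i)
          ≤ ∑ i, (fLog k + ((rc T i : ℝ) - k) * dL k) :=
            Finset.sum_le_sum fun i _ => tangent k (rc T i) hk1 (hr1 i)
        _ = (n:ℝ) * fLog k + ((∑ i, (rc T i:ℝ)) - (n:ℝ) * k) * dL k := by
            rw [Finset.sum_add_distrib, Finset.sum_const, Finset.card_univ, Fintype.card_fin,
              nsmul_eq_mul, ← Finset.sum_mul]
            congr 2
            rw [Finset.sum_sub_distrib, Finset.sum_const, Finset.card_univ, Fintype.card_fin,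
              nsmul_eq_mul]
        _ = (n:ℝ) * fLog k := by rw [hsumR]; ring
    calc perm T ≤ Real.exp (∑ i, fLog (rc T i)) := bregman n T h01
      _ ≤ Real.exp ((n:ℝ) * fLog k) := Real.exp_le_exp.2 htan
      _ = (k ! : ℝ) ^ ((2 * (n : ℝ)) / ((n : ℝ) - 1)) := by
          rw [Real.rpow_def_of_pos hfac]
          congr 1
          have hn1 : (n:ℝ) - 1 = 2 * k := by
            have : (n:ℝ) = 2 * k + 1 := by exact_mod_cast hk
            rw [this]; ring
          rw [hn1, fLog]
          have hkpos : (0:ℝ) < (k:ℝ) := by exact_mod_cast hk1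
          field_simp
end
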